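/- Let T be a triangulated dg-category over k equipped with a compact t-structure. Then an object E of T̂ is compact if and only if there exist integers a ≤ b with E ∈ T̂^{[a,b]} and, for every i, the cohomology object H^i_t(E) ∈ Ĥ belongs to H = Ĥ ∩ [T]. -/

import Mathlib

/-!
Statement 0 (Toën–Vaquié, "Systèmes de points dans les dg-catégories saturées",
Proposition 2.3 (1)):

Let `T` be a triangulated dg-category over an algebraically closed field `k` of
characteristic zero, equipped with a compact t-structure.  Then for every pair of
integers `a ≤ b`, the full sub-dg-category `T̂^{[a,b]} ⊆ T̂` is stable under filtered
colimits, and the cohomology functors `H^i_t : |T̂| → Ĥ` commute with filtered colimits.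

We model the (∞-category underlying the) dg-category `T̂` of `T^op`-dg-modules by a
`k`-linear pretriangulated category `C` with all colimits; the full subcategory of
compact objects models `T`.  A t-structure on `T` is a t-structure on `C = [T̂]`
(Mathlib's `Triangulated.TStructure`), which we equip with truncation functors and the
associated cohomology functors `H^i_t`.
-/

open CategoryTheory Limits Pretriangulated Triangulated

universe v u

set_option linter.unusedSectionVars false

namespace TV

variable {C : Type u} [Category.{v} C]

/-- An object `x` of a category is compact (ω-small) if `Hom(x, -)` commutes with all
filtered colimits. -/
def IsCompactObj (x : C) : Prop :=
  ∀ (J : Type v) [SmallCategory J] [IsFiltered J] (F : J ⥤ C) (c : Cocone F),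
    IsColimit c → Nonempty (IsColimit ((coyoneda.obj (Opposite.op x)).mapCocone c))

variable [Preadditive C] [HasZeroObject C] [HasShift C ℤ]
  [∀ (n : ℤ), (shiftFunctor C n).Additive] [Pretriangulated C]

/-- Truncation data for a t-structure: truncation functors `τ_{≤n}`, `τ_{≥n}` together
with the canonical morphisms and the associated distinguished triangles
`τ_{≤n} x ⟶ x ⟶ τ_{≥n+1} x ⟶ (τ_{≤n} x)[1]`. -/
structure Truncation (t : TStructure C) where
  truncLE (n : ℤ) : C ⥤ C
  truncGE (n : ℤ) : C ⥤ C
  truncLE_le (n : ℤ) (x : C) : t.le n ((truncLE n).obj x)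
  truncGE_ge (n : ℤ) (x : C) : t.ge n ((truncGE n).obj x)
  ι (n : ℤ) : truncLE n ⟶ 𝟭 C
  π (n : ℤ) : 𝟭 C ⟶ truncGE n
  δ (n : ℤ) (x : C) : (truncGE (n + 1)).obj x ⟶ ((truncLE n).obj x)⟦(1 : ℤ)⟧
  triangle_mem (n : ℤ) (x : C) :
    Triangle.mk ((ι n).app x) ((π (n + 1)).app x) (δ n x) ∈ distTriang C

/-- The cohomology functor `H^i_t := τ_{≤i} τ_{≥i} (-)[i]` associated to a t-structure
with truncations; it takes values in the heart `Ĥ`. -/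
def Truncation.H {t : TStructure C} (tr : Truncation t) (i : ℤ) : C ⥤ C :=
  tr.truncGE i ⋙ tr.truncLE i ⋙ shiftFunctor C i

/-- A t-structure (with truncations) is *compact* (Définition 2.2) if it is bounded
(compact objects have bounded amplitude), precompact (truncations preserve compact
objects), and the positive part `T̂^{≥0}` is stable under filtered colimits. -/
structure IsCompactTStructure (t : TStructure C) (tr : Truncation t) : Prop where
  bounded : ∀ x : C, IsCompactObj x → ∃ a b : ℤ, a ≤ b ∧ t.ge a x ∧ t.le b x
  precompact_le : ∀ (x : C) (n : ℤ), IsCompactObj x → IsCompactObj ((tr.truncLE n).obj x)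
  precompact_ge : ∀ (x : C) (n : ℤ), IsCompactObj x → IsCompactObj ((tr.truncGE n).obj x)
  ge_stable : ∀ (J : Type v) [SmallCategory J] [IsFiltered J] (F : J ⥤ C) (c : Cocone F),
    IsColimit c → (∀ j : J, t.ge 0 (F.obj j)) → t.ge 0 c.pt


lemma isCompactObj_iff (x : C) :
    IsCompactObj x ↔
    ∀ (J : Type v) [SmallCategory J] [IsFiltered J] (F : J ⥤ C) (c : Cocone F),
      IsColimit c →
      (∀ u : x ⟶ c.pt, ∃ (j : J) (v : x ⟶ F.obj j), v ≫ c.ι.app j = u) ∧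
      (∀ (j j' : J) (v : x ⟶ F.obj j) (v' : x ⟶ F.obj j'),
        v ≫ c.ι.app j = v' ≫ c.ι.app j' →
        ∃ (k : J) (e : j ⟶ k) (e' : j' ⟶ k), v ≫ F.map e = v' ≫ F.map e') := by
  constructor
  · intro hx J _ _ F c hc
    obtain ⟨h⟩ := hx J F c hc
    constructor
    · intro u
      obtain ⟨j, y, hy⟩ := Types.jointly_surjective (F ⋙ coyoneda.obj (Opposite.op x)) h u
      exact ⟨j, y, hy⟩
    · intro j j' v v' hvv'
      obtain ⟨k, e, e', he⟩ := (Types.FilteredColimit.isColimit_eq_iff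
        (F ⋙ coyoneda.obj (Opposite.op x)) h (xi := v) (xj := v')).1 hvv'
      exact ⟨k, e, e', he⟩
  · intro hx J _ _ F c hc
    obtain ⟨hsurj, hinj⟩ := hx J F c hc
    refine ⟨Types.FilteredColimit.isColimitOf _ _ ?_ ?_⟩
    · intro u
      obtain ⟨j, v, hv⟩ := hsurj u
      exact ⟨j, v, hv.symm⟩
    · intro i j xi xj hij
      exact hinj i j xi xj hij

lemma IsCompactObj.of_iso {x y : C} (hx : IsCompactObj x) (e : x ≅ y) : IsCompactObj y := by
  rw [isCompactObj_iff] at hx ⊢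
  intro J _ _ F c hc
  obtain ⟨hsurj, hinj⟩ := hx J F c hc
  constructor
  · intro u
    obtain ⟨j, v, hv⟩ := hsurj (e.hom ≫ u)
    exact ⟨j, e.inv ≫ v, by rw [Category.assoc, hv, e.inv_hom_id_assoc]⟩
  · intro j j' v v' hvv'
    obtain ⟨k, f, f', hf⟩ := hinj j j' (e.hom ≫ v) (e.hom ≫ v')
      (by rw [Category.assoc, Category.assoc, hvv'])
    refine ⟨k, f, f', ?_⟩
    have := hf
    rw [Category.assoc, Category.assoc] at this
    calc v ≫ F.map f = e.inv ≫ e.hom ≫ v ≫ F.map f := by rw [e.inv_hom_id_assoc]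
    _ = e.inv ≫ e.hom ≫ v' ≫ F.map f' := by rw [this]
    _ = v' ≫ F.map f' := by rw [e.inv_hom_id_assoc]

lemma IsCompactObj.of_isZero {x : C} (h : IsZero x) : IsCompactObj x := by
  rw [isCompactObj_iff]
  intro J _ _ F c hc
  constructor
  · intro u
    obtain ⟨j⟩ := IsFiltered.nonempty (C := J)
    exact ⟨j, h.to_ (F.obj j), h.eq_of_src _ _⟩
  · intro j j' v v' _
    exact ⟨IsFiltered.max j j', IsFiltered.leftToMax j j', IsFiltered.rightToMax j j',
      h.eq_of_src _ _⟩

lemma IsCompactObj.shift {x : C} (hx : IsCompactObj x) (n : ℤ) :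
    IsCompactObj (x⟦n⟧) := by
  rw [isCompactObj_iff] at hx ⊢
  intro J _ _ F c hc
  let adj := (shiftEquiv C n).toAdjunction
  let S := (shiftEquiv C n).inverse
  have hpres : PreservesColimitsOfSize.{v, v} S :=
    (shiftEquiv C (-n)).toAdjunction.leftAdjoint_preservesColimits
  have hc' : IsColimit (S.mapCocone c) := isColimitOfPreserves S hc
  obtain ⟨hsurj, hinj⟩ := hx J (F ⋙ S) (S.mapCocone c) hc'
  constructor
  · intro u
    obtain ⟨j, v, hv⟩ := hsurj (adj.homEquiv x c.pt u)
    refine ⟨j, (adj.homEquiv x (F.obj j)).symm v, (adj.homEquiv x c.pt).injective ?_⟩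
    refine (adj.homEquiv_naturality_right _ _).trans ?_
    simpa using hv
  · intro j j' v v' hvv'
    obtain ⟨k, e, e', he⟩ := hinj j j' (adj.homEquiv _ _ v) (adj.homEquiv _ _ v') (by
      dsimp only [Functor.mapCocone_ι_app]
      exact (adj.homEquiv_naturality_right v (c.ι.app j)).symm.trans
        ((congrArg (adj.homEquiv x c.pt) hvv').trans (adj.homEquiv_naturality_right v' (c.ι.app j'))))
    refine ⟨k, e, e', (adj.homEquiv _ _).injective ?_⟩
    exact (adj.homEquiv_naturality_right v (F.map e)).trans
      (he.trans (adj.homEquiv_naturality_right v' (F.map e')).symm)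


lemma isCompactObj₂ (T : Triangle C) (hT : T ∈ distTriang C)
    (h₁ : IsCompactObj T.obj₁) (h₃ : IsCompactObj T.obj₃) : IsCompactObj T.obj₂ := by
  rw [isCompactObj_iff]
  intro J _ _ F c hc
  obtain ⟨hs₁, hi₁⟩ := (isCompactObj_iff T.obj₁).1 h₁ J F c hc
  obtain ⟨hs₃, hi₃⟩ := (isCompactObj_iff T.obj₃).1 h₃ J F c hc
  obtain ⟨hs₁', hi₁'⟩ := (isCompactObj_iff _).1 (h₁.shift 1) J F c hc
  obtain ⟨hs₃', hi₃'⟩ := (isCompactObj_iff _).1 (h₃.shift (-1)) J F c hc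
  have hT' := inv_rot_of_distTriang T hT
  constructor
  · -- surjectivity
    intro u
    obtain ⟨j, v, hv⟩ : ∃ (j : J) (v : T.obj₁ ⟶ F.obj j), v ≫ c.ι.app j = T.mor₁ ≫ u :=
      hs₁ (T.mor₁ ≫ u)
    -- w := T.invRotate.mor₁ : T.obj₃⟦-1⟧ ⟶ T.obj₁, w ≫ T.mor₁ = 0
    have hw : T.invRotate.mor₁ ≫ T.mor₁ = 0 := comp_distTriang_mor_zero₁₂ _ hT'
    have h0 : (T.invRotate.mor₁ ≫ v) ≫ c.ι.app j =
        (0 : T.obj₃⟦(-1 : ℤ)⟧ ⟶ F.obj j) ≫ c.ι.app j := by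
      exact (Category.assoc _ _ _).trans ((congrArg (T.invRotate.mor₁ ≫ ·) hv).trans
        ((Category.assoc _ _ _).symm.trans ((congrArg (· ≫ u) hw).trans (zero_comp.trans zero_comp.symm))))
    obtain ⟨k, e, e', he⟩ := hi₃' j j _ _ h0
    rw [zero_comp] at he
    set v₁ : T.obj₁ ⟶ F.obj k := v ≫ F.map e with hv₁
    have hwv₁ : T.invRotate.mor₁ ≫ v₁ = 0 := by
      exact (Category.assoc _ _ _).symm.trans he
    have hv₁c : v₁ ≫ c.ι.app k = T.mor₁ ≫ u := by
      rw [hv₁, Category.assoc, c.w e, hv]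
    -- exactness: v₁ factors through T.mor₁ ... using invRotate triangle at obj₂
    obtain ⟨g₀, hg⟩ := Triangle.yoneda_exact₂ _ hT' v₁ hwv₁
    -- hg : v₁ = T.invRotate.mor₂ ≫ g₀, and T.invRotate.mor₂ = T.mor₁
    obtain ⟨g, hg'⟩ : ∃ (g : T.obj₂ ⟶ F.obj k), v₁ = T.mor₁ ≫ g := ⟨g₀, hg⟩
    have hfac : T.mor₁ ≫ (u - (g ≫ c.ι.app k : T.obj₂ ⟶ c.pt)) = 0 := by
      rw [Preadditive.comp_sub, ← Category.assoc, ← hg', hv₁c, sub_self]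
    obtain ⟨z, hz⟩ := Triangle.yoneda_exact₂ _ hT _ hfac
    obtain ⟨l, zw, hzw⟩ := hs₃ z
    refine ⟨IsFiltered.max k l,
      g ≫ F.map (IsFiltered.leftToMax k l) + T.mor₂ ≫ zw ≫ F.map (IsFiltered.rightToMax k l), ?_⟩
    rw [Preadditive.add_comp, Category.assoc, Category.assoc, Category.assoc, c.w, c.w, hzw]
    rw [← hz]
    abel
  · -- injectivity
    intro j j' u u' huu'
    set m₀ := IsFiltered.max j j'
    set uw : T.obj₂ ⟶ F.obj m₀ := u ≫ F.map (IsFiltered.leftToMax j j')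
    set uw' : T.obj₂ ⟶ F.obj m₀ := u' ≫ F.map (IsFiltered.rightToMax j j')
    set d := uw - uw' with hd
    have hdc : d ≫ c.ι.app m₀ = 0 := by
      rw [hd, Preadditive.sub_comp, Category.assoc, Category.assoc, c.w, c.w, huu', sub_self]
    have h0 : (T.mor₁ ≫ d) ≫ c.ι.app m₀ = (0 : T.obj₁ ⟶ F.obj m₀) ≫ c.ι.app m₀ := by
      rw [Category.assoc, hdc, comp_zero, zero_comp]
    obtain ⟨k₁, e, e'', he⟩ := hi₁ m₀ m₀ _ _ h0
    rw [zero_comp] at he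
    set d₁ := d ≫ F.map e with hd₁
    have hfd₁ : T.mor₁ ≫ d₁ = 0 := by rw [hd₁, ← Category.assoc]; exact he
    have hd₁c : d₁ ≫ c.ι.app k₁ = 0 := by rw [hd₁, Category.assoc, c.w, hdc]
    obtain ⟨z, hz⟩ := Triangle.yoneda_exact₂ _ hT d₁ hfd₁
    have hgz : T.mor₂ ≫ (z ≫ c.ι.app k₁) = 0 := by
      rw [← Category.assoc, ← hz, hd₁c]
    obtain ⟨x₁, hx₁⟩ := Triangle.yoneda_exact₃ _ hT _ hgz
    obtain ⟨l, xw, hxw⟩ := hs₁' x₁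
    have hcomp : z ≫ c.ι.app k₁ = (T.mor₃ ≫ xw) ≫ c.ι.app l := by
      rw [hx₁, ← hxw, Category.assoc]
    obtain ⟨p, e₂, e₃, he₂⟩ := hi₃ k₁ l z (T.mor₃ ≫ xw) hcomp
    have hd₁0 : d₁ ≫ F.map e₂ = 0 := by
      rw [hz, Category.assoc, he₂, ← Category.assoc, ← Category.assoc,
        comp_distTriang_mor_zero₂₃ _ hT, zero_comp, zero_comp]
    refine ⟨p, IsFiltered.leftToMax j j' ≫ e ≫ e₂, IsFiltered.rightToMax j j' ≫ e ≫ e₂, ?_⟩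
    have : d ≫ F.map (e ≫ e₂) = 0 := by rw [F.map_comp, ← Category.assoc, ← hd₁]; exact hd₁0
    rw [hd, Preadditive.sub_comp, sub_eq_zero] at this
    simpa [uw, uw', F.map_comp, Category.assoc] using this


variable {t : TStructure C} (tr : Truncation t)

lemma tzero {x y : C} (f : x ⟶ y) (n₀ n₁ : ℤ) (h : n₀ < n₁)
    (hx : t.le n₀ x) (hy : t.ge n₁ y) : f = 0 := by
  have hx' : t.le 0 (x⟦n₀⟧) := t.le_shift n₀ n₀ 0 (by omega) x hx
  have hy' : t.ge 1 (y⟦n₀⟧) :=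
    t.ge_antitone (show (1:ℤ) ≤ n₁ - n₀ by omega) _ (t.ge_shift n₁ n₀ (n₁ - n₀) (by omega) y hy)
  have h0 := t.zero' ((shiftFunctor C n₀).map f) hx' hy'
  exact (shiftFunctor C n₀).map_injective (by rw [h0, Functor.map_zero])

lemma isZero_truncLE_of_iota_zero (n : ℤ) (x : C) (h : (tr.ι n).app x = 0) :
    IsZero ((tr.truncLE n).obj x) := by
  have hT := inv_rot_of_distTriang _ (tr.triangle_mem n x)
  obtain ⟨g, hg⟩ := Triangle.coyoneda_exact₂ _ hT (𝟙 ((tr.truncLE n).obj x))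
    (by exact (Category.id_comp _).trans h)
  have hg0 : g = 0 := tzero g n (n + 2) (by omega) (tr.truncLE_le n x)
    (t.ge_shift (n + 1) (-1) (n + 2) (by omega) _ (tr.truncGE_ge (n + 1) x))
  rw [IsZero.iff_id_eq_zero, hg, hg0]; exact zero_comp

lemma isZero_truncGE_of_pi_zero (n : ℤ) (x : C) (h : (tr.π (n + 1)).app x = 0) :
    IsZero ((tr.truncGE (n + 1)).obj x) := by
  have hT := tr.triangle_mem n x
  obtain ⟨g, hg⟩ := Triangle.yoneda_exact₃ _ hT (𝟙 ((tr.truncGE (n + 1)).obj x))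
    (by exact (Category.comp_id _).trans h)
  have hg0 : g = 0 := tzero g (n - 1) (n + 1) (by omega)
    (t.le_shift n 1 (n - 1) (by omega) _ (tr.truncLE_le n x)) (tr.truncGE_ge (n + 1) x)
  rw [IsZero.iff_id_eq_zero, hg, hg0]; exact comp_zero

lemma isZero_truncLE_of_ge {n m : ℤ} (h : n < m) (x : C) (hx : t.ge m x) :
    IsZero ((tr.truncLE n).obj x) :=
  isZero_truncLE_of_iota_zero tr n x (tzero _ n m h (tr.truncLE_le n x) hx)

lemma isZero_truncGE_of_le {n m : ℤ} (h : m < n) (x : C) (hx : t.le m x) :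
    IsZero ((tr.truncGE n).obj x) := by
  obtain ⟨p, rfl⟩ : ∃ p, n = p + 1 := ⟨n - 1, by omega⟩
  exact isZero_truncGE_of_pi_zero tr p x
    (tzero _ m (p + 1) (by omega) hx (tr.truncGE_ge (p + 1) x))

lemma isIso_iota_app (n : ℤ) (x : C) (hx : t.le n x) : IsIso ((tr.ι n).app x) :=
  (Triangle.isZero₃_iff_isIso₁ _ (tr.triangle_mem n x)).1
    (isZero_truncGE_of_le tr (show n < n + 1 by omega) x hx)

lemma isIso_pi_app (n : ℤ) (x : C) (hx : t.ge n x) : IsIso ((tr.π n).app x) := by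
  obtain ⟨m, rfl⟩ : ∃ m, n = m + 1 := ⟨n - 1, by omega⟩
  exact (Triangle.isZero₁_iff_isIso₂ _ (tr.triangle_mem m x)).1
    (isZero_truncLE_of_ge tr (show m < m + 1 by omega) x hx)

include tr in
lemma le₂ (T : Triangle C) (hT : T ∈ distTriang C) (n : ℤ)
    (h₁ : t.le n T.obj₁) (h₃ : t.le n T.obj₃) : t.le n T.obj₂ := by
  have h1 : T.mor₁ ≫ (tr.π (n + 1)).app T.obj₂ = 0 :=
    tzero _ n (n + 1) (by omega) h₁ (tr.truncGE_ge (n + 1) T.obj₂)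
  obtain ⟨g, hg⟩ := Triangle.yoneda_exact₂ T hT _ h1
  have hg0 : g = 0 := tzero g n (n + 1) (by omega) h₃ (tr.truncGE_ge (n + 1) T.obj₂)
  have hπ : (tr.π (n + 1)).app T.obj₂ = 0 := by rw [hg, hg0, comp_zero]
  have hzero := isZero_truncGE_of_pi_zero tr n T.obj₂ hπ
  have : IsIso ((tr.ι n).app T.obj₂) :=
    (Triangle.isZero₃_iff_isIso₁ _ (tr.triangle_mem n T.obj₂)).1 hzero
  exact (t.le n).prop_of_iso (asIso ((tr.ι n).app T.obj₂)) (tr.truncLE_le n T.obj₂)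

include tr in
lemma ge₂ (T : Triangle C) (hT : T ∈ distTriang C) (n : ℤ)
    (h₁ : t.ge n T.obj₁) (h₃ : t.ge n T.obj₃) : t.ge n T.obj₂ := by
  obtain ⟨m, rfl⟩ : ∃ m, n = m + 1 := ⟨n - 1, by omega⟩
  have h1 : (tr.ι m).app T.obj₂ ≫ T.mor₂ = 0 :=
    tzero _ m (m + 1) (by omega) (tr.truncLE_le m T.obj₂) h₃
  obtain ⟨g, hg⟩ := Triangle.coyoneda_exact₂ T hT _ h1
  have hg0 : g = 0 := tzero g m (m + 1) (by omega) (tr.truncLE_le m T.obj₂) h₁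
  have hι : (tr.ι m).app T.obj₂ = 0 := by rw [hg, hg0, zero_comp]
  have hzero := isZero_truncLE_of_iota_zero tr m T.obj₂ hι
  have : IsIso ((tr.π (m + 1)).app T.obj₂) :=
    (Triangle.isZero₁_iff_isIso₂ _ (tr.triangle_mem m T.obj₂)).1 hzero
  exact (t.ge (m + 1)).prop_of_iso (asIso ((tr.π (m + 1)).app T.obj₂)).symm
    (tr.truncGE_ge (m + 1) T.obj₂)

lemma truncGE_truncGE_iso {m i : ℤ} (h : m ≤ i) (x : C) :
    Nonempty ((tr.truncGE i).obj ((tr.truncGE m).obj x) ≅ (tr.truncGE i).obj x) := by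
  obtain ⟨m', rfl⟩ : ∃ m', m = m' + 1 := ⟨m - 1, by omega⟩
  obtain ⟨i', rfl⟩ : ∃ i', i = i' + 1 := ⟨i - 1, by omega⟩
  set B := (tr.truncGE (m' + 1)).obj x with hB
  set G := (tr.truncGE (i' + 1)).obj x with hG
  set G' := (tr.truncGE (i' + 1)).obj B with hG'
  have hTm := tr.triangle_mem m' x
  have hTi := tr.triangle_mem i' x
  have hTi' := tr.triangle_mem i' B
  obtain ⟨ψ, hψ⟩ : ∃ ψ : G ⟶ G',
      (tr.π (m' + 1)).app x ≫ (tr.π (i' + 1)).app B = (tr.π (i' + 1)).app x ≫ ψ :=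
    Triangle.yoneda_exact₂ _ hTi ((tr.π (m' + 1)).app x ≫ (tr.π (i' + 1)).app B)
      (by refine (Category.assoc _ _ _).symm.trans ?_
          exact tzero _ i' (i' + 1) (by omega) (tr.truncLE_le i' x) (tr.truncGE_ge (i' + 1) B))
  obtain ⟨ρ, hρ⟩ : ∃ ρ : B ⟶ G, (tr.π (i' + 1)).app x = (tr.π (m' + 1)).app x ≫ ρ :=
    Triangle.yoneda_exact₂ _ hTm ((tr.π (i' + 1)).app x)
      (tzero _ m' (i' + 1) (by omega) (tr.truncLE_le m' x) (tr.truncGE_ge (i' + 1) x))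
  obtain ⟨φ, hφ⟩ : ∃ φ : G' ⟶ G, ρ = (tr.π (i' + 1)).app B ≫ φ :=
    Triangle.yoneda_exact₂ _ hTi' ρ
      (tzero _ i' (i' + 1) (by omega) (tr.truncLE_le i' B) (tr.truncGE_ge (i' + 1) x))
  have hψφ : ψ ≫ φ = 𝟙 G := by
    have hcancel : (tr.π (i' + 1)).app x ≫ (ψ ≫ φ - 𝟙 G) = 0 := by
      rw [Preadditive.comp_sub, Category.comp_id, ← Category.assoc, ← hψ,
        Category.assoc, ← hφ, ← hρ, sub_self]
    obtain ⟨g, hg⟩ : ∃ g : ((tr.truncLE i').obj x)⟦(1 : ℤ)⟧ ⟶ G,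
        ψ ≫ φ - 𝟙 G = tr.δ i' x ≫ g := Triangle.yoneda_exact₃ _ hTi _ hcancel
    have hg0 : g = 0 := tzero g (i' - 1) (i' + 1) (by omega)
      (t.le_shift i' 1 (i' - 1) (by omega) _ (tr.truncLE_le i' x)) (tr.truncGE_ge (i' + 1) x)
    rw [hg0, comp_zero, sub_eq_zero] at hg
    exact hg
  obtain ⟨πB, hπB⟩ : ∃ πB : B ⟶ G', πB = (tr.π (i' + 1)).app B := ⟨(tr.π (i' + 1)).app B, rfl⟩
  have hρψ : ρ ≫ ψ = πB := by
    have hcancel : (tr.π (m' + 1)).app x ≫ (ρ ≫ ψ - πB) = 0 := by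
      rw [Preadditive.comp_sub, ← Category.assoc, ← hρ, ← hψ, hπB, sub_self]
    obtain ⟨g, hg⟩ : ∃ g : ((tr.truncLE m').obj x)⟦(1 : ℤ)⟧ ⟶ G',
        ρ ≫ ψ - πB = tr.δ m' x ≫ g :=
      Triangle.yoneda_exact₃ _ hTm _ hcancel
    have hg0 : g = 0 := tzero g (m' - 1) (i' + 1) (by omega)
      (t.le_shift m' 1 (m' - 1) (by omega) _ (tr.truncLE_le m' x)) (tr.truncGE_ge (i' + 1) B)
    rw [hg0, comp_zero, sub_eq_zero] at hg
    exact hg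
  have hφψ : φ ≫ ψ = 𝟙 G' := by
    have hcancel : (tr.π (i' + 1)).app B ≫ (φ ≫ ψ - 𝟙 G') = 0 := by
      rw [Preadditive.comp_sub, Category.comp_id, ← Category.assoc, ← hφ, hρψ, hπB, sub_self]
    obtain ⟨g, hg⟩ : ∃ g : ((tr.truncLE i').obj B)⟦(1 : ℤ)⟧ ⟶ G',
        φ ≫ ψ - 𝟙 G' = tr.δ i' B ≫ g := Triangle.yoneda_exact₃ _ hTi' _ hcancel
    have hg0 : g = 0 := tzero g (i' - 1) (i' + 1) (by omega)
      (t.le_shift i' 1 (i' - 1) (by omega) _ (tr.truncLE_le i' B)) (tr.truncGE_ge (i' + 1) B)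
    rw [hg0, comp_zero, sub_eq_zero] at hg
    exact hg
  exact ⟨⟨φ, ψ, hφψ, hψφ⟩⟩


lemma compact_of_bounded_of_H_compact {t : TStructure C} (tr : Truncation t) :
    ∀ (n : ℕ) (a b : ℤ), a ≤ b → b - a ≤ (n : ℤ) →
      ∀ E : C, t.ge a E → t.le b E → (∀ i : ℤ, IsCompactObj ((tr.H i).obj E)) →
      IsCompactObj E := by
  intro n
  induction n with
  | zero =>
    intro a b hab hba E hGE hLE hH
    rw [show b = a by omega] at hLE
    have hπ : IsIso ((tr.π a).app E) := isIso_pi_app tr a E hGE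
    have e1 : E ≅ (tr.truncGE a).obj E := asIso ((tr.π a).app E)
    have hle : t.le a ((tr.truncGE a).obj E) := (t.le a).prop_of_iso e1 hLE
    have hι : IsIso ((tr.ι a).app ((tr.truncGE a).obj E)) := isIso_iota_app tr a _ hle
    have e2 : (tr.truncLE a).obj ((tr.truncGE a).obj E) ≅ (tr.truncGE a).obj E :=
      asIso ((tr.ι a).app _)
    have e3 : (tr.H a).obj E ≅ E⟦a⟧ := (shiftFunctor C a).mapIso (e2 ≪≫ e1.symm)
    have h4 : IsCompactObj (E⟦a⟧) := (hH a).of_iso e3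
    have h5 : IsCompactObj ((E⟦a⟧)⟦(-a : ℤ)⟧) := h4.shift (-a)
    exact h5.of_iso ((shiftFunctorCompIsoId C a (-a) (add_neg_cancel a)).app E)
  | succ n IH =>
    intro a b hab hba E hGE hLE hH
    by_cases hcase : b - a ≤ (n : ℤ)
    · exact IH a b hab hcase E hGE hLE hH
    have hab1 : a + 1 ≤ b := by omega
    have hT := tr.triangle_mem a E
    have hπ : IsIso ((tr.π a).app E) := isIso_pi_app tr a E hGE
    have e1 : E ≅ (tr.truncGE a).obj E := asIso ((tr.π a).app E)
    have e2 : (tr.truncLE a).obj E ≅ (tr.truncLE a).obj ((tr.truncGE a).obj E) :=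
      (tr.truncLE a).mapIso e1
    have e3 : (tr.H a).obj E ≅ ((tr.truncLE a).obj E)⟦a⟧ :=
      (shiftFunctor C a).mapIso e2.symm
    have hA1 : IsCompactObj (((tr.truncLE a).obj E)⟦a⟧) := (hH a).of_iso e3
    have hA : IsCompactObj ((tr.truncLE a).obj E) :=
      (hA1.shift (-a)).of_iso ((shiftFunctorCompIsoId C a (-a) (add_neg_cancel a)).app _)
    set B := (tr.truncGE (a + 1)).obj E with hBdef
    have hB_GE : t.ge (a + 1) B := tr.truncGE_ge (a + 1) E
    have hB_LE : t.le b B := by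
      refine le₂ tr _ (rot_of_distTriang _ hT) b hLE ?_
      exact t.le_monotone (show a - 1 ≤ b by omega) _
        (t.le_shift a 1 (a - 1) (by omega) _ (tr.truncLE_le a E))
    have hB_H : ∀ i : ℤ, IsCompactObj ((tr.H i).obj B) := by
      intro i
      by_cases hi : a + 1 ≤ i
      · obtain ⟨e⟩ := truncGE_truncGE_iso tr hi E
        exact (hH i).of_iso ((tr.truncLE i ⋙ shiftFunctor C i).mapIso e).symm
      · have hGEi : t.ge i B := t.ge_antitone (show i ≤ a + 1 by omega) _ hB_GE
        have hπ' : IsIso ((tr.π i).app B) := isIso_pi_app tr i B hGEi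
        have hGEi1 : t.ge (i + 1) ((tr.truncGE i).obj B) :=
          (t.ge (i + 1)).prop_of_iso (asIso ((tr.π i).app B))
            (t.ge_antitone (show i + 1 ≤ a + 1 by omega) _ hB_GE)
        have hz : IsZero ((tr.truncLE i).obj ((tr.truncGE i).obj B)) :=
          isZero_truncLE_of_ge tr (show i < i + 1 by omega) _ hGEi1
        exact IsCompactObj.of_isZero ((shiftFunctor C i).map_isZero hz)
    have hB : IsCompactObj B := IH (a + 1) b hab1 (by omega) B hB_GE hB_LE hB_H
    exact isCompactObj₂ _ hT hA hB

/-- Let `T` be a triangulated dg-category over `k` with a compact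
t-structure.  An object `E ∈ T̂` is compact if and only if there are integers `a ≤ b`
with `E ∈ T̂^{[a,b]}` and, for every `i`, the cohomology object `H^i_t(E) ∈ Ĥ` belongs
to `H = Ĥ ∩ [T]`, i.e. is a compact object of `[T̂]`. -/
theorem compact_iff_bounded_with_compact_cohomology
    (k : Type u) [Field k] [IsAlgClosed k] [CharZero k]
    [Linear k C] [HasColimits C]
    (t : TStructure C) (tr : Truncation t) (ht : IsCompactTStructure t tr)
    (E : C) :
    IsCompactObj E ↔
      ((∃ a b : ℤ, a ≤ b ∧ t.ge a E ∧ t.le b E) ∧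
        ∀ i : ℤ, IsCompactObj ((tr.H i).obj E)) := by
  constructor
  · intro hE
    refine ⟨ht.bounded E hE, fun i => ?_⟩
    exact ((ht.precompact_le ((tr.truncGE i).obj E) i (ht.precompact_ge E i hE)).shift i)
  · rintro ⟨⟨a, b, hab, hGE, hLE⟩, hH⟩
    exact compact_of_bounded_of_H_compact tr (b - a).toNat a b hab (by omega) E hGE hLE hH

end TV
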